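/- Suppose L : ℝ≥0 → ℝ is measurable with |L(x)| ≤ A(x) + B(x) + C(x), where for some ν ≥ 2: A(x) = (νx)^{-1/4}·1_{[0,ν/2]}(x), B(x) = ν^{-1/4}|ν - x|^{-1/4}·1_{[ν/2, 3ν/2]}(x), C(x) = e^{-τx} for some fixed τ > 0. Then there is a constant C' independent of ν and s such that ∫_0^∞ |L(x)|·|x - s|^{-1/2} dx ≤ C' for all s ∈ ℝ. -/

import Mathlib

open Real MeasureTheory Set intervalIntegral

lemma abs_rpow_intInt (r : ℝ) (hr : -1 < r) (a b : ℝ) :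
    IntervalIntegrable (fun x => |x| ^ r) volume a b := by
  have key : ∀ c : ℝ, 0 ≤ c → IntervalIntegrable (fun x => |x| ^ r) volume 0 c := by
    intro c hc
    refine (intervalIntegrable_rpow' hr (a := 0) (b := c)).congr_ae ?_
    filter_upwards [ae_restrict_mem measurableSet_uIoc] with x hx
    rw [uIoc_of_le hc] at hx
    rw [abs_of_pos hx.1]
  have key2 : ∀ c : ℝ, IntervalIntegrable (fun x => |x| ^ r) volume 0 c := by
    intro c
    rcases le_total 0 c with hc | hc
    · exact key c hc
    · have h := (IntervalIntegrable.iff_comp_neg (by simp)).mp (key (-c) (by linarith))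
      simp only [abs_neg, neg_neg, neg_zero] at h
      exact h
  exact (key2 a).symm.trans (key2 b)

lemma abs_sub_rpow_intInt (r : ℝ) (hr : -1 < r) (s a b : ℝ) :
    IntervalIntegrable (fun x => |x - s| ^ r) volume a b := by
  have := (abs_rpow_intInt r hr (a - s) (b - s)).comp_sub_right s
  simpa using this

lemma abs_sub_rpow_integrableOn (r : ℝ) (hr : -1 < r) (s a b : ℝ) :
    IntegrableOn (fun x => |x - s| ^ r) (Icc a b) volume := by
  rcases le_or_gt a b with hab | hab
  · rw [integrableOn_Icc_iff_integrableOn_Ioc]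
    exact (intervalIntegrable_iff_integrableOn_Ioc_of_le hab).mp
      (abs_sub_rpow_intInt r hr s a b)
  · rw [Icc_eq_empty (not_le.mpr hab)]
    exact integrableOn_empty

lemma integral_abs_sub_rpow (r : ℝ) (hr : -1 < r) (hr0 : r ≠ -1) (s c : ℝ) (hc : 0 ≤ c) :
    ∫ x in Icc (s - c) (s + c), |x - s| ^ r = 2 * (c ^ (r + 1) / (r + 1)) := by
  rw [MeasureTheory.integral_Icc_eq_integral_Ioc,
    ← intervalIntegral.integral_of_le (by linarith : s - c ≤ s + c)]
  rw [show (fun x => |x - s| ^ r) = (fun x => (fun u => |u| ^ r) (x - s)) from rfl]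
  rw [intervalIntegral.integral_comp_sub_right (fun u => |u| ^ r) s]
  have h1 : (s - c - s) = -c := by ring
  have h2 : (s + c - s) = c := by ring
  rw [h1, h2]
  rw [← intervalIntegral.integral_add_adjacent_intervals
    (abs_rpow_intInt r hr (-c) 0) (abs_rpow_intInt r hr 0 c)]
  have e1 : (∫ x in (0:ℝ)..c, |x| ^ r) = c ^ (r + 1) / (r + 1) := by
    rw [show (∫ x in (0:ℝ)..c, |x| ^ r) = ∫ x in (0:ℝ)..c, x ^ r from ?_,
      integral_rpow (Or.inl hr)]
    · simp [Real.zero_rpow (by intro h; apply hr0; linarith : r + 1 ≠ 0)]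
    · refine intervalIntegral.integral_congr_ae ?_
      filter_upwards [] with x hx
      rw [uIoc_of_le hc] at hx
      rw [abs_of_pos hx.1]
  have e2 : (∫ x in (-c:ℝ)..0, |x| ^ r) = c ^ (r + 1) / (r + 1) := by
    have := intervalIntegral.integral_comp_neg (a := (0:ℝ)) (b := c) (fun u => |u| ^ r)
    simp only [abs_neg, neg_zero] at this
    rw [← this, e1]
  rw [e1, e2]; ring

lemma key_pt (a b : ℝ) (ha : 0 ≤ a) (hb : 0 ≤ b) :
    a ^ (-(1/4) : ℝ) * b ^ (-(1/2) : ℝ) ≤ a ^ (-(3/4) : ℝ) + b ^ (-(3/4) : ℝ) := by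
  rcases eq_or_lt_of_le ha with h | ha'
  · rw [← h, Real.zero_rpow (by norm_num : (-(1/4):ℝ) ≠ 0), zero_mul]
    positivity
  rcases eq_or_lt_of_le hb with h | hb'
  · rw [← h, Real.zero_rpow (by norm_num : (-(1/2):ℝ) ≠ 0), mul_zero]
    positivity
  rcases le_total a b with hab | hab
  · have h1 : b ^ (-(1/2):ℝ) ≤ a ^ (-(1/2):ℝ) :=
      Real.rpow_le_rpow_of_nonpos ha' hab (by norm_num)
    have h2 : a ^ (-(1/4):ℝ) * b ^ (-(1/2):ℝ) ≤ a ^ (-(1/4):ℝ) * a ^ (-(1/2):ℝ) :=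
      mul_le_mul_of_nonneg_left h1 (Real.rpow_nonneg ha _)
    have h3 : a ^ (-(1/4):ℝ) * a ^ (-(1/2):ℝ) = a ^ (-(3/4):ℝ) := by
      rw [← Real.rpow_add ha']; norm_num
    have h4 : (0:ℝ) ≤ b ^ (-(3/4):ℝ) := Real.rpow_nonneg hb _
    linarith
  · have h1 : a ^ (-(1/4):ℝ) ≤ b ^ (-(1/4):ℝ) :=
      Real.rpow_le_rpow_of_nonpos hb' hab (by norm_num)
    have h2 : a ^ (-(1/4):ℝ) * b ^ (-(1/2):ℝ) ≤ b ^ (-(1/4):ℝ) * b ^ (-(1/2):ℝ) :=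
      mul_le_mul_of_nonneg_right h1 (Real.rpow_nonneg hb _)
    have h3 : b ^ (-(1/4):ℝ) * b ^ (-(1/2):ℝ) = b ^ (-(3/4):ℝ) := by
      rw [← Real.rpow_add hb']; norm_num
    have h4 : (0:ℝ) ≤ a ^ (-(3/4):ℝ) := Real.rpow_nonneg ha _
    linarith

lemma piece_bound (S : Set ℝ) (hS : MeasurableSet S) (f : ℝ → ℝ) (hf : ∀ x ∈ S, 0 ≤ f x)
    (hfi : IntegrableOn f S volume) :
    ∫ x in Ioi (0:ℝ), S.indicator f x ≤ ∫ x in S, f x := by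
  rw [setIntegral_indicator hS]
  refine setIntegral_mono_set hfi ?_ (HasSubset.Subset.eventuallyLE inter_subset_right)
  filter_upwards [ae_restrict_mem hS] with x hx using hf x hx

set_option maxHeartbeats 2000000 in
theorem laguerre_type_uniform_integral_bound (τ : ℝ) (hτ : 0 < τ) :
    ∃ C' : ℝ, ∀ ν : ℝ, 2 ≤ ν → ∀ L : ℝ → ℝ, Measurable L →
      (∀ x : ℝ, 0 ≤ x → |L x| ≤
          Set.indicator (Set.Icc 0 (ν / 2)) (fun x => (ν * x) ^ (-(1/4) : ℝ)) x +
          Set.indicator (Set.Icc (ν / 2) (3 * ν / 2))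
            (fun x => ν ^ (-(1/4) : ℝ) * |ν - x| ^ (-(1/4) : ℝ)) x +
          Real.exp (-τ * x)) →
      ∀ s : ℝ, ∫ x in Set.Ioi (0 : ℝ), |L x| * |x - s| ^ (-(1/2) : ℝ) ≤ C' := by
  refine ⟨35 + τ⁻¹, fun ν hν L hL hbound s => ?_⟩
  have hν0 : (0:ℝ) < ν := by linarith
  set T1 : ℝ → ℝ := fun x => ν ^ (-(1/4):ℝ) *
    (Icc (0:ℝ) (ν/2)).indicator (fun y => y ^ (-(3/4):ℝ)) x with hT1def
  set T2 : ℝ → ℝ := fun x => ν ^ (-(1/4):ℝ) *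
    (Icc (s-ν) (s+ν)).indicator (fun y => |y - s| ^ (-(3/4):ℝ)) x with hT2def
  set Tc : ℝ → ℝ := fun x => ν⁻¹ *
    (Icc (0:ℝ) (3*ν/2)).indicator (fun _ => (1:ℝ)) x with hTcdef
  set T3 : ℝ → ℝ := fun x => ν ^ (-(1/4):ℝ) *
    (Icc (ν/2) (3*ν/2)).indicator (fun y => |y - ν| ^ (-(3/4):ℝ)) x with hT3def
  set T5 : ℝ → ℝ := fun x => (Icc (s-1) (s+1)).indicator (fun y => |y - s| ^ (-(1/2):ℝ)) x
    with hT5def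
  set T6 : ℝ → ℝ := fun x => Real.exp (-τ * x) with hT6def
  -- nonnegativity
  have hT1n : ∀ x, 0 ≤ T1 x := fun x => mul_nonneg (Real.rpow_nonneg hν0.le _)
    (Set.indicator_nonneg (fun y hy => Real.rpow_nonneg hy.1 _) x)
  have hT2n : ∀ x, 0 ≤ T2 x := fun x => mul_nonneg (Real.rpow_nonneg hν0.le _)
    (Set.indicator_nonneg (fun y _ => Real.rpow_nonneg (abs_nonneg _) _) x)
  have hTcn : ∀ x, 0 ≤ Tc x := fun x => mul_nonneg (inv_nonneg.mpr hν0.le)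
    (Set.indicator_nonneg (fun y _ => zero_le_one) x)
  have hT3n : ∀ x, 0 ≤ T3 x := fun x => mul_nonneg (Real.rpow_nonneg hν0.le _)
    (Set.indicator_nonneg (fun y _ => Real.rpow_nonneg (abs_nonneg _) _) x)
  have hT5n : ∀ x, 0 ≤ T5 x :=
    fun x => Set.indicator_nonneg (fun y _ => Real.rpow_nonneg (abs_nonneg _) _) x
  have hT6n : ∀ x, 0 ≤ T6 x := fun x => (Real.exp_pos _).le
  have hcoef : (0:ℝ) ≤ ν ^ (-(1/4):ℝ) := Real.rpow_nonneg hν0.le _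
  -- integrability
  have hiT1 : Integrable T1 (volume.restrict (Ioi (0:ℝ))) := by
    apply Integrable.const_mul
    apply Integrable.restrict
    refine IntegrableOn.integrable_indicator ?_ measurableSet_Icc
    rw [integrableOn_Icc_iff_integrableOn_Ioc]
    exact (intervalIntegrable_iff_integrableOn_Ioc_of_le (by linarith)).mp
      (intervalIntegrable_rpow' (by norm_num))
  have hiT2 : Integrable T2 (volume.restrict (Ioi (0:ℝ))) :=
    Integrable.const_mul (Integrable.restrict
      (IntegrableOn.integrable_indicator
        (abs_sub_rpow_integrableOn (-(3/4)) (by norm_num) s (s-ν) (s+ν)) measurableSet_Icc)) _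
  have hiTc : Integrable Tc (volume.restrict (Ioi (0:ℝ))) :=
    Integrable.const_mul (Integrable.restrict
      (IntegrableOn.integrable_indicator
        (integrableOn_const measure_Icc_lt_top.ne) measurableSet_Icc)) _
  have hiT3 : Integrable T3 (volume.restrict (Ioi (0:ℝ))) :=
    Integrable.const_mul (Integrable.restrict
      (IntegrableOn.integrable_indicator
        (abs_sub_rpow_integrableOn (-(3/4)) (by norm_num) ν (ν/2) (3*ν/2)) measurableSet_Icc)) _
  have hiT5 : Integrable T5 (volume.restrict (Ioi (0:ℝ))) :=
    Integrable.restrict (IntegrableOn.integrable_indicator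
      (abs_sub_rpow_integrableOn (-(1/2)) (by norm_num) s (s-1) (s+1)) measurableSet_Icc)
  have hiT6 : Integrable T6 (volume.restrict (Ioi (0:ℝ))) := exp_neg_integrableOn_Ioi 0 hτ
  have i56 : Integrable (fun x => T5 x + T6 x) (volume.restrict (Ioi (0:ℝ))) :=
    hiT5.add hiT6
  have i356 : Integrable (fun x => T3 x + (T5 x + T6 x)) (volume.restrict (Ioi (0:ℝ))) :=
    hiT3.add i56
  have ic356 : Integrable (fun x => 2 * Tc x + (T3 x + (T5 x + T6 x)))
      (volume.restrict (Ioi (0:ℝ))) := (hiTc.const_mul 2).add i356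
  have i2c356 : Integrable (fun x => 2 * T2 x + (2 * Tc x + (T3 x + (T5 x + T6 x))))
      (volume.restrict (Ioi (0:ℝ))) := (hiT2.const_mul 2).add ic356
  have hiG : Integrable (fun x => T1 x + (2*T2 x + (2*Tc x + (T3 x + (T5 x + T6 x)))))
      (volume.restrict (Ioi (0:ℝ))) := hiT1.add i2c356
  -- pointwise bound
  have hle : ∀ᵐ x ∂(volume.restrict (Ioi (0:ℝ))),
      |L x| * |x - s| ^ (-(1/2):ℝ) ≤ T1 x + (2*T2 x + (2*Tc x + (T3 x + (T5 x + T6 x)))) := by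
    filter_upwards [ae_restrict_mem measurableSet_Ioi] with x hx
    have hx0 : (0:ℝ) ≤ x := le_of_lt hx
    have hg0 : (0:ℝ) ≤ |x - s| ^ (-(1/2):ℝ) := Real.rpow_nonneg (abs_nonneg _) _
    have h1 := mul_le_mul_of_nonneg_right (hbound x hx0) hg0
    rw [add_mul, add_mul] at h1
    -- the |x-s|^{-3/4} absorption
    have habsorb : ∀ hx3 : x ∈ Icc (0:ℝ) (3*ν/2),
        ν ^ (-(1/4):ℝ) * |x - s| ^ (-(3/4):ℝ) ≤ T2 x + Tc x := by
      intro hx3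
      by_cases hm2 : x ∈ Icc (s-ν) (s+ν)
      · have e : T2 x = ν ^ (-(1/4):ℝ) * |x - s| ^ (-(3/4):ℝ) := by
          rw [hT2def]; simp only [Set.indicator_of_mem hm2]
        linarith [hTcn x]
      · have habs : ν < |x - s| := by
          by_contra hcon
          push_neg at hcon
          rcases abs_le.mp hcon with ⟨h1', h2'⟩
          exact hm2 ⟨by linarith, by linarith⟩
        have hle1 : |x - s| ^ (-(3/4):ℝ) ≤ ν ^ (-(3/4):ℝ) :=
          Real.rpow_le_rpow_of_nonpos hν0 habs.le (by norm_num)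
        have heq : ν ^ (-(1/4):ℝ) * ν ^ (-(3/4):ℝ) = ν⁻¹ := by
          rw [← Real.rpow_add hν0]
          norm_num [Real.rpow_neg_one]
        have hTcx : Tc x = ν⁻¹ := by
          rw [hTcdef]; simp only [Set.indicator_of_mem hx3]; ring
        have h5 := mul_le_mul_of_nonneg_left hle1 hcoef
        linarith [hT2n x]
    have hA : (Icc (0:ℝ) (ν/2)).indicator (fun y => (ν * y) ^ (-(1/4):ℝ)) x
        * |x - s| ^ (-(1/2):ℝ) ≤ T1 x + (T2 x + Tc x) := by
      by_cases hm : x ∈ Icc (0:ℝ) (ν/2)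
      · rw [Set.indicator_of_mem hm]
        rw [Real.mul_rpow hν0.le hx0, mul_assoc]
        have hkey := key_pt x |x - s| hx0 (abs_nonneg _)
        have step := mul_le_mul_of_nonneg_left hkey hcoef
        have e1 : T1 x = ν ^ (-(1/4):ℝ) * x ^ (-(3/4):ℝ) := by
          rw [hT1def]; simp only [Set.indicator_of_mem hm]
        have e2 := habsorb ⟨hm.1, by linarith [hm.2]⟩
        calc ν ^ (-(1/4):ℝ) * (x ^ (-(1/4):ℝ) * |x - s| ^ (-(1/2):ℝ))
            ≤ ν ^ (-(1/4):ℝ) * (x ^ (-(3/4):ℝ) + |x - s| ^ (-(3/4):ℝ)) := step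
          _ = ν ^ (-(1/4):ℝ) * x ^ (-(3/4):ℝ)
              + ν ^ (-(1/4):ℝ) * |x - s| ^ (-(3/4):ℝ) := by ring
          _ ≤ T1 x + (T2 x + Tc x) := by rw [e1]; linarith
      · rw [Set.indicator_of_notMem hm, zero_mul]
        have := hT1n x; have := hT2n x; have := hTcn x; linarith
    have hB : (Icc (ν/2) (3*ν/2)).indicator
        (fun y => ν ^ (-(1/4):ℝ) * |ν - y| ^ (-(1/4):ℝ)) x
        * |x - s| ^ (-(1/2):ℝ) ≤ T3 x + (T2 x + Tc x) := by
      by_cases hm : x ∈ Icc (ν/2) (3*ν/2)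
      · rw [Set.indicator_of_mem hm, mul_assoc]
        have hkey := key_pt |ν - x| |x - s| (abs_nonneg _) (abs_nonneg _)
        have step := mul_le_mul_of_nonneg_left hkey hcoef
        have e1 : T3 x = ν ^ (-(1/4):ℝ) * |ν - x| ^ (-(3/4):ℝ) := by
          rw [hT3def]; simp only [Set.indicator_of_mem hm]
          rw [abs_sub_comm x ν]
        have e2 := habsorb ⟨by linarith [hm.1], hm.2⟩
        calc ν ^ (-(1/4):ℝ) * (|ν - x| ^ (-(1/4):ℝ) * |x - s| ^ (-(1/2):ℝ))
            ≤ ν ^ (-(1/4):ℝ) * (|ν - x| ^ (-(3/4):ℝ) + |x - s| ^ (-(3/4):ℝ)) := step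
          _ = ν ^ (-(1/4):ℝ) * |ν - x| ^ (-(3/4):ℝ)
              + ν ^ (-(1/4):ℝ) * |x - s| ^ (-(3/4):ℝ) := by ring
          _ ≤ T3 x + (T2 x + Tc x) := by rw [e1]; linarith
      · rw [Set.indicator_of_notMem hm, zero_mul]
        have := hT3n x; have := hT2n x; have := hTcn x; linarith
    have hC : Real.exp (-τ * x) * |x - s| ^ (-(1/2):ℝ) ≤ T5 x + T6 x := by
      by_cases hm : x ∈ Icc (s-1) (s+1)
      · have hexp : Real.exp (-τ * x) ≤ 1 := by
          rw [Real.exp_le_one_iff]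
          nlinarith
        have e1 : T5 x = |x - s| ^ (-(1/2):ℝ) := by
          rw [hT5def]; simp only [Set.indicator_of_mem hm]
        have := mul_le_mul_of_nonneg_right hexp hg0
        rw [one_mul] at this
        linarith [hT6n x]
      · have habs : 1 < |x - s| := by
          by_contra hcon
          push_neg at hcon
          rcases abs_le.mp hcon with ⟨h1', h2'⟩
          exact hm ⟨by linarith, by linarith⟩
        have hle1 : |x - s| ^ (-(1/2):ℝ) ≤ 1 :=
          Real.rpow_le_one_of_one_le_of_nonpos habs.le (by norm_num)
        have := mul_le_mul_of_nonneg_left hle1 (Real.exp_pos (-τ * x)).le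
        rw [mul_one] at this
        linarith [hT5n x]
    linarith
  have hf0 : 0 ≤ᵐ[volume.restrict (Ioi (0:ℝ))]
      fun x => |L x| * |x - s| ^ (-(1/2):ℝ) :=
    Filter.Eventually.of_forall fun x =>
      mul_nonneg (abs_nonneg _) (Real.rpow_nonneg (abs_nonneg _) _)
  have hmono := integral_mono_of_nonneg hf0 hiG hle
  refine hmono.trans ?_
  rw [integral_add hiT1 i2c356, integral_add (hiT2.const_mul 2) ic356,
    integral_add (hiTc.const_mul 2) i356, integral_add hiT3 i56, integral_add hiT5 hiT6]
  have hone : ν ^ (-(1/4):ℝ) * ν ^ ((1:ℝ)/4) = 1 := by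
    rw [← Real.rpow_add hν0]; norm_num
  have hhalf : ((ν/2):ℝ) ^ ((1:ℝ)/4) ≤ ν ^ ((1:ℝ)/4) :=
    Real.rpow_le_rpow (by linarith) (by linarith) (by norm_num)
  have hexp34 : (-(3/4):ℝ) + 1 = 1/4 := by norm_num
  -- bound T1
  have bT1 : ∫ x in Ioi (0:ℝ), T1 x ≤ 4 := by
    rw [hT1def]
    rw [MeasureTheory.integral_const_mul]
    have hp := piece_bound (Icc (0:ℝ) (ν/2)) measurableSet_Icc
      (fun y => y ^ (-(3/4):ℝ)) (fun y hy => Real.rpow_nonneg hy.1 _)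
      (by rw [integrableOn_Icc_iff_integrableOn_Ioc]
          exact (intervalIntegrable_iff_integrableOn_Ioc_of_le (by linarith)).mp
            (intervalIntegrable_rpow' (by norm_num)))
    have hval : ∫ x in Icc (0:ℝ) (ν/2), x ^ (-(3/4):ℝ) = 4 * (ν/2) ^ ((1:ℝ)/4) := by
      rw [MeasureTheory.integral_Icc_eq_integral_Ioc,
        ← intervalIntegral.integral_of_le (by linarith : (0:ℝ) ≤ ν/2),
        integral_rpow (Or.inl (by norm_num)), hexp34]
      rw [Real.zero_rpow (by norm_num : ((1:ℝ)/4) ≠ 0)]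
      ring
    rw [hval] at hp
    have h2 := mul_le_mul_of_nonneg_left hp hcoef
    have h3 := mul_le_mul_of_nonneg_left hhalf hcoef
    nlinarith
  -- bound T2
  have bT2 : ∫ x in Ioi (0:ℝ), T2 x ≤ 8 := by
    rw [hT2def, MeasureTheory.integral_const_mul]
    have hp := piece_bound (Icc (s-ν) (s+ν)) measurableSet_Icc
      (fun y => |y - s| ^ (-(3/4):ℝ)) (fun y _ => Real.rpow_nonneg (abs_nonneg _) _)
      (abs_sub_rpow_integrableOn (-(3/4)) (by norm_num) s (s-ν) (s+ν))
    have hval : ∫ x in Icc (s-ν) (s+ν), |x - s| ^ (-(3/4):ℝ) = 8 * ν ^ ((1:ℝ)/4) := by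
      rw [integral_abs_sub_rpow (-(3/4)) (by norm_num) (by norm_num) s ν hν0.le, hexp34]
      ring
    rw [hval] at hp
    have h2 := mul_le_mul_of_nonneg_left hp hcoef
    nlinarith
  -- bound Tc
  have bTc : ∫ x in Ioi (0:ℝ), Tc x ≤ 3/2 := by
    rw [hTcdef, MeasureTheory.integral_const_mul]
    have hp := piece_bound (Icc (0:ℝ) (3*ν/2)) measurableSet_Icc
      (fun _ => (1:ℝ)) (fun y _ => zero_le_one)
      (integrableOn_const measure_Icc_lt_top.ne)
    have hval : ∫ _x in Icc (0:ℝ) (3*ν/2), (1:ℝ) = 3*ν/2 := by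
      rw [setIntegral_const, Real.volume_real_Icc_of_le (by linarith), smul_eq_mul, mul_one]
      ring
    rw [hval] at hp
    have h2 := mul_le_mul_of_nonneg_left hp (inv_nonneg.mpr hν0.le)
    have h3 : ν⁻¹ * (3*ν/2) = 3/2 := by field_simp
    linarith
  -- bound T3
  have bT3 : ∫ x in Ioi (0:ℝ), T3 x ≤ 8 := by
    rw [hT3def, MeasureTheory.integral_const_mul]
    have hp := piece_bound (Icc (ν/2) (3*ν/2)) measurableSet_Icc
      (fun y => |y - ν| ^ (-(3/4):ℝ)) (fun y _ => Real.rpow_nonneg (abs_nonneg _) _)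
      (abs_sub_rpow_integrableOn (-(3/4)) (by norm_num) ν (ν/2) (3*ν/2))
    have hset : Icc (ν/2) (3*ν/2) = Icc (ν - ν/2) (ν + ν/2) := by congr 1 <;> ring
    have hval : ∫ x in Icc (ν/2) (3*ν/2), |x - ν| ^ (-(3/4):ℝ) = 8 * (ν/2) ^ ((1:ℝ)/4) := by
      rw [hset, integral_abs_sub_rpow (-(3/4)) (by norm_num) (by norm_num) ν (ν/2)
        (by linarith), hexp34]
      ring
    rw [hval] at hp
    have h2 := mul_le_mul_of_nonneg_left hp hcoef
    have h3 := mul_le_mul_of_nonneg_left hhalf hcoef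
    nlinarith
  -- bound T5
  have bT5 : ∫ x in Ioi (0:ℝ), T5 x ≤ 4 := by
    rw [hT5def]
    have hp := piece_bound (Icc (s-1) (s+1)) measurableSet_Icc
      (fun y => |y - s| ^ (-(1/2):ℝ)) (fun y _ => Real.rpow_nonneg (abs_nonneg _) _)
      (abs_sub_rpow_integrableOn (-(1/2)) (by norm_num) s (s-1) (s+1))
    have hval : ∫ x in Icc (s-1) (s+1), |x - s| ^ (-(1/2):ℝ) = 4 := by
      rw [integral_abs_sub_rpow (-(1/2)) (by norm_num) (by norm_num) s 1 zero_le_one]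
      norm_num
    rw [hval] at hp
    exact hp
  -- bound T6
  have bT6 : ∫ x in Ioi (0:ℝ), T6 x = τ⁻¹ := by
    rw [hT6def]
    simp only [neg_mul]
    rw [integral_comp_mul_left_Ioi (fun u => Real.exp (-u)) 0 hτ, mul_zero,
      integral_exp_neg_Ioi_zero, smul_eq_mul, mul_one]
  have b2T2 : ∫ a in Ioi (0:ℝ), 2 * T2 a ≤ 16 := by
    rw [MeasureTheory.integral_const_mul]; linarith
  have b2Tc : ∫ a in Ioi (0:ℝ), 2 * Tc a ≤ 3 := by
    rw [MeasureTheory.integral_const_mul]; linarith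
  linarith
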